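/- In the setting of the hierarchical multilevel control-variate estimator, assume Var_p(f_h) > 0 for h = 1, …, L, and define the quasi-optimal coefficients λ̂*_h = Cov_p(f_{h+1}, f_h)/Var_p(f_h) for h = 1, …, L. Then there exists a constant C ≥ 0, depending only on L, the variances Var_p(f_h) and the covariances Cov_p(f_{h+1}, f_h) (but not on the batch sizes), such that for all positive integers M_0 ≥ M_1 ≥ … ≥ M_L, the unique minimizer Λ* = (λ*_1,…,λ*_L) of the variance of the estimator satisfies, for every h = 1, …, L, |∏_{j=h}^{L} λ̂*_j − λ*_h| ≤ C·μ̄_h, where μ̄_h = max_{h ≤ k ≤ L} M_k/(M_{k−1}+M_k). -/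

import Mathlib

open MeasureTheory ProbabilityTheory

/-- Covariance under `p` of two square-integrable functions of a `p`-distributed variable. -/
noncomputable def covP {Z : Type*} [MeasurableSpace Z] (p : Measure Z) (f g : Z → ℝ) : ℝ :=
  ∫ z, (f z - ∫ z', f z' ∂p) * (g z - ∫ z', g z' ∂p) ∂p

/-- Extension of a coefficient vector `Λ = (λ_1, …, λ_L)` to `ℕ`, with the conventions
`λ_0 = 0` and `λ_{L+1} = 1`. -/
def lamExt (L : ℕ) (Λ : Fin L → ℝ) : ℕ → ℝ := fun h =>
  if h0 : h = 0 then 0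
  else if hL : h ≤ L then Λ ⟨h - 1, by omega⟩
  else if h = L + 1 then 1 else 0

/-- The variance of the hierarchical multilevel control-variate estimator with coefficients
`lam` (where `lam (L+1) = 1` is intended), batch sizes `M_0, …, M_L` and models
`f_1, …, f_{L+1}`:
`lam₁² M₀⁻¹ Var_p(f₁) + ∑_{h=1}^{L} M_h⁻¹ (lam_{h+1}² Var_p(f_{h+1}) + lam_h² Var_p(f_h)
  − 2 lam_{h+1} lam_h Cov_p(f_{h+1}, f_h))`. -/
noncomputable def hierVar {Z : Type*} [MeasurableSpace Z] (p : Measure Z)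
    (L : ℕ) (f : ℕ → Z → ℝ) (M : ℕ → ℕ) (lam : ℕ → ℝ) : ℝ :=
  (lam 1) ^ 2 * (M 0 : ℝ)⁻¹ * variance (f 1) p
    + ∑ h ∈ Finset.Icc 1 L, (M h : ℝ)⁻¹ *
        ((lam (h + 1)) ^ 2 * variance (f (h + 1)) p
          + (lam h) ^ 2 * variance (f h) p
          - 2 * lam (h + 1) * lam h * covP p (f (h + 1)) (f h))

lemma quad_b_zero {A B : ℝ} (hA : 0 < A) (h : ∀ t : ℝ, t ≠ 0 → 0 < A * t ^ 2 + B * t) :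
    B = 0 := by
  by_contra hB
  have ht : -(B / (2 * A)) ≠ 0 := by
    simp only [ne_eq, neg_eq_zero, div_eq_zero_iff]
    push_neg
    exact ⟨hB, by positivity⟩
  have := h _ ht
  have h2A : (2 * A) ≠ 0 := by positivity
  have hexp : A * (-(B / (2 * A))) ^ 2 + B * -(B / (2 * A)) = -(B ^ 2 / (4 * A)) := by
    field_simp
    ring
  rw [hexp] at this
  have : 0 < B ^ 2 / (4 * A) := by positivity
  linarith

lemma lamExt_zero (L : ℕ) (Λ : Fin L → ℝ) : lamExt L Λ 0 = 0 := by simp [lamExt]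

lemma lamExt_top (L : ℕ) (Λ : Fin L → ℝ) : lamExt L Λ (L + 1) = 1 := by
  simp [lamExt, Nat.succ_ne_zero]

lemma lamExt_update {L : ℕ} (Λ : Fin L → ℝ) (i : Fin L) (t : ℝ) (n : ℕ) :
    lamExt L (Function.update Λ i (Λ i + t)) n
      = lamExt L Λ n + if n = i.1 + 1 then t else 0 := by
  unfold lamExt
  by_cases h0 : n = 0
  · subst h0
    simp
  · by_cases hL : n ≤ L
    · simp only [dif_neg h0, dif_pos hL, Function.update_apply]
      by_cases he : n = i.1 + 1
      · have hfin : (⟨n - 1, by omega⟩ : Fin L) = i := by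
          apply Fin.ext
          simp only
          omega
        rw [if_pos hfin, if_pos he, hfin]
      · have hfin : (⟨n - 1, by omega⟩ : Fin L) ≠ i := by
          intro hc
          apply he
          have := congrArg Fin.val hc
          simp only at this
          omega
        rw [if_neg hfin, if_neg he, add_zero]
    · have hne : n ≠ i.1 + 1 := by
        have := i.2
        omega
      simp [dif_neg h0, dif_neg hL, hne]

lemma covP_sq_le {Z : Type*} [MeasurableSpace Z] (p : Measure Z) [IsProbabilityMeasure p]
    {f g : Z → ℝ} (hf : MemLp f 2 p) (hg : MemLp g 2 p) :
    covP p f g ^ 2 ≤ variance f p * variance g p := by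
  set F : Z → ℝ := fun z => f z - ∫ z', f z' ∂p with hFdef
  set G : Z → ℝ := fun z => g z - ∫ z', g z' ∂p with hGdef
  have hF : MemLp F 2 p := hf.sub (memLp_const _)
  have hG : MemLp G 2 p := hg.sub (memLp_const _)
  have hmul : ∀ (u v : Z → ℝ), MemLp u 2 p → MemLp v 2 p →
      Integrable (fun z => u z * v z) p := by
    intro u v hu hv
    have := hv.smul (r := 1) hu
    rw [memLp_one_iff_integrable] at this
    exact this
  have iFF : Integrable (fun z => F z * F z) p := hmul F F hF hF
  have iFG : Integrable (fun z => F z * G z) p := hmul F G hF hG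
  have iGG : Integrable (fun z => G z * G z) p := hmul G G hG hG
  have hvf : variance f p = ∫ z, F z * F z ∂p := by
    rw [variance_eq_integral hf.aemeasurable]
    congr 1
    ext z
    simp [F, sq, Pi.pow_apply]
  have hvg : variance g p = ∫ z, G z * G z ∂p := by
    rw [variance_eq_integral hg.aemeasurable]
    congr 1
    ext z
    simp [G, sq, Pi.pow_apply]
  have key : discrim (∫ z, F z * F z ∂p) (2 * ∫ z, F z * G z ∂p) (∫ z, G z * G z ∂p) ≤ 0 := by
    apply discrim_le_zero
    intro t
    have : (∫ z, (t * F z + G z) * (t * F z + G z) ∂p)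
        = (∫ z, F z * F z ∂p) * (t * t) + (2 * ∫ z, F z * G z ∂p) * t
          + (∫ z, G z * G z ∂p) := by
      have : (fun z => (t * F z + G z) * (t * F z + G z))
          = fun z => (t * t) * (F z * F z) + ((2 * t) * (F z * G z) + G z * G z) := by
        funext z; ring
      have h1 : Integrable (fun z => t * t * (F z * F z)) p := iFF.const_mul (t * t)
      have h2a : Integrable (fun z => 2 * t * (F z * G z)) p := iFG.const_mul (2 * t)
      have h2 : Integrable (fun z => 2 * t * (F z * G z) + G z * G z) p := h2a.add iGG
      rw [this, integral_add h1 h2, integral_add h2a iGG, integral_const_mul,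
        integral_const_mul]
      ring
    rw [← this]
    exact integral_nonneg fun z => mul_self_nonneg _
  rw [discrim] at key
  have hcov : covP p f g = ∫ z, F z * G z ∂p := rfl
  rw [hcov, hvf, hvg]
  nlinarith [key]

lemma foc_of_min {Z : Type*} [MeasurableSpace Z] (p : Measure Z)
    (L : ℕ) (f : ℕ → Z → ℝ) (M : ℕ → ℕ)
    (hM : ∀ k, k ≤ L → 0 < M k)
    (hvar : ∀ h, 1 ≤ h → h ≤ L → 0 < variance (f h) p)
    (Λstar : Fin L → ℝ)
    (hmin : ∀ Λ : Fin L → ℝ, Λ ≠ Λstar →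
      hierVar p L f M (lamExt L Λstar) < hierVar p L f M (lamExt L Λ))
    (k : ℕ) (hk1 : 1 ≤ k) (hkL : k ≤ L) :
    variance (f k) p * ((M (k-1) : ℝ)⁻¹ + (M k : ℝ)⁻¹) * lamExt L Λstar k
      = (M k : ℝ)⁻¹ * covP p (f (k+1)) (f k) * lamExt L Λstar (k+1)
        + (M (k-1) : ℝ)⁻¹ * covP p (f k) (f (k-1)) * lamExt L Λstar (k-1) := by
  set lam : ℕ → ℝ := lamExt L Λstar with hlam
  set m : ℕ → ℝ := fun j => (M j : ℝ)⁻¹ with hm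
  set s : ℕ → ℝ := fun j => variance (f j) p with hs
  set i : Fin L := ⟨k - 1, by omega⟩ with hi
  have hik : i.1 + 1 = k := by simp [hi]; omega
  set B : ℝ := 2 * (s k * (m (k-1) + m k) * lam k - m k * covP p (f (k+1)) (f k) * lam (k+1)
      - m (k-1) * covP p (f k) (f (k-1)) * lam (k-1)) with hB
  have lam0 : lam 0 = 0 := lamExt_zero L Λstar
  have expand : ∀ (t : ℝ) (lamt : ℕ → ℝ), (∀ n, lamt n = lam n + if n = k then t else 0) →
      hierVar p L f M lamt
        = hierVar p L f M lam + (s k * (m (k-1) + m k)) * t ^ 2 + B * t := by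
    intro t lamt hlamt
    unfold hierVar
    rw [hlamt 1]
    have hsum : ∀ j ∈ Finset.Icc 1 L,
        (M j : ℝ)⁻¹ *
          ((lamt (j+1)) ^ 2 * variance (f (j+1)) p
            + (lamt j) ^ 2 * variance (f j) p
            - 2 * (lamt (j+1)) * (lamt j) * covP p (f (j+1)) (f j))
        = (M j : ℝ)⁻¹ *
            ((lam (j+1)) ^ 2 * variance (f (j+1)) p + (lam j) ^ 2 * variance (f j) p
              - 2 * lam (j+1) * lam j * covP p (f (j+1)) (f j))
          + (if j = k - 1 then
              m j * (2 * lam k * t * s k + t ^ 2 * s k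
                - 2 * covP p (f (j+1)) (f j) * lam j * t) else 0)
          + (if j = k then
              m j * (2 * lam k * t * s k + t ^ 2 * s k
                - 2 * covP p (f (j+1)) (f j) * lam (j+1) * t) else 0) := by
      intro j hj
      simp only [Finset.mem_Icc] at hj
      rw [hlamt (j+1), hlamt j]
      by_cases h1 : j + 1 = k
      · have h3 : j ≠ k := by omega
        have h2 : j = k - 1 := by omega
        rw [if_pos h1, if_neg h3, if_pos h2, if_neg h3, ← h1]
        ring
      · by_cases h4 : j = k
        · have h5 : j ≠ k - 1 := by omega
          rw [if_neg h1, if_pos h4, if_neg h5, if_pos h4, ← h4]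
          ring
        · have h5 : j ≠ k - 1 := by omega
          rw [if_neg h1, if_neg h4, if_neg h5, if_neg h4]
          ring
    rw [Finset.sum_congr rfl hsum]
    rw [Finset.sum_add_distrib, Finset.sum_add_distrib,
      Finset.sum_ite_eq' (Finset.Icc 1 L) (k-1), Finset.sum_ite_eq' (Finset.Icc 1 L) k]
    have hkmem : k ∈ Finset.Icc 1 L := Finset.mem_Icc.mpr ⟨hk1, hkL⟩
    rw [if_pos hkmem]
    by_cases hk : k = 1
    · subst hk
      have hnot : (1 : ℕ) - 1 ∉ Finset.Icc 1 L := by simp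
      rw [if_neg hnot, if_pos rfl]
      simp only [hB, hm, hs, show (1:ℕ) - 1 = 0 from rfl, lam0]
      ring
    · have hmem : k - 1 ∈ Finset.Icc 1 L := Finset.mem_Icc.mpr ⟨by omega, by omega⟩
      have h1k : (1 : ℕ) ≠ k := fun hc => hk hc.symm
      have hkk : k - 1 + 1 = k := by omega
      rw [if_pos hmem, if_neg h1k, hkk]
      simp only [hB, hm, hs]
      ring
  have hmk : 0 < m k := by
    simp only [hm, inv_pos]
    exact_mod_cast hM k hkL
  have hmk1 : 0 < m (k-1) := by
    simp only [hm, inv_pos]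
    exact_mod_cast hM (k-1) (by omega)
  have hA : 0 < s k * (m (k-1) + m k) := by
    have := hvar k hk1 hkL
    have h2 : 0 < m (k-1) + m k := by linarith
    exact mul_pos this h2
  have hB0 : B = 0 := by
    apply quad_b_zero hA
    intro t ht
    have hne : Function.update Λstar i (Λstar i + t) ≠ Λstar := by
      intro hc
      have := congrFun hc i
      rw [Function.update_self] at this
      exact ht (by linarith)
    have hlt := hmin _ hne
    have heq : lamExt L (Function.update Λstar i (Λstar i + t))
        = fun n => lam n + if n = k then t else 0 := by
      funext n
      rw [lamExt_update, hik]
    rw [heq] at hlt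
    rw [expand t _ (fun n => rfl)] at hlt
    linarith
  have := hB0
  rw [hB] at this
  have h2 : s k * (m (k-1) + m k) * lam k - m k * covP p (f (k+1)) (f k) * lam (k+1)
      - m (k-1) * covP p (f k) (f (k-1)) * lam (k-1) = 0 := by linarith
  simp only [hs, hm] at h2 ⊢
  linarith

set_option maxHeartbeats 2000000 in
/-- with positive variances `Var_p(f_h) > 0` and quasi-optimal coefficients
`λ̂*_h = Cov_p(f_{h+1}, f_h)/Var_p(f_h)`, there is a constant `C ≥ 0`, independent of the
batch sizes, such that for all positive decreasing batch sizes `M_0 ≥ … ≥ M_L` the unique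
minimizer `Λ*` of the estimator's variance satisfies
`|∏_{j=h}^{L} λ̂*_j − λ*_h| ≤ C·μ̄_h` with `μ̄_h = max_{h ≤ k ≤ L} M_k/(M_{k−1}+M_k)`. -/
theorem stmt9 {Z : Type*} [MeasurableSpace Z] (p : Measure Z) [IsProbabilityMeasure p]
    (L : ℕ) (f : ℕ → Z → ℝ)
    (hf : ∀ h, 1 ≤ h → h ≤ L + 1 → MemLp (f h) 2 p)
    (hvar : ∀ h, 1 ≤ h → h ≤ L → 0 < variance (f h) p) :
    ∃ C : ℝ, 0 ≤ C ∧
      ∀ M : ℕ → ℕ, (∀ h, h ≤ L → 0 < M h) →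
        (∀ h, 1 ≤ h → h ≤ L → M h ≤ M (h - 1)) →
        ∀ Λstar : Fin L → ℝ,
          (∀ Λ : Fin L → ℝ, Λ ≠ Λstar →
            hierVar p L f M (lamExt L Λstar) < hierVar p L f M (lamExt L Λ)) →
          ∀ h, 1 ≤ h → ∀ hL : h ≤ L,
            |(∏ j ∈ Finset.Icc h L, covP p (f (j + 1)) (f j) / variance (f j) p)
                - lamExt L Λstar h|
              ≤ C * (Finset.Icc h L).sup' (Finset.nonempty_Icc.mpr hL)
                  (fun k => (M k : ℝ) / ((M (k - 1) : ℝ) + (M k : ℝ))) := by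
  classical
  set s : ℕ → ℝ := fun j => variance (f j) p with hsdef
  set c : ℕ → ℝ := fun j => covP p (f (j + 1)) (f j) with hcdef
  have hss : ∀ j, variance (f j) p = s j := fun _ => rfl
  have hcc : ∀ j, covP p (f (j + 1)) (f j) = c j := fun _ => rfl
  set a : ℝ := 1 + ∑ j ∈ Finset.Icc 1 L, |c j / s j| with hadef
  have ha1 : 1 ≤ a := by
    have h0 : 0 ≤ ∑ j ∈ Finset.Icc 1 L, |c j / s j| :=
      Finset.sum_nonneg fun j _ => abs_nonneg _
    simp only [hadef]
    linarith
  have ha0 : 0 < a := lt_of_lt_of_le one_pos ha1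
  have haj : ∀ j, 1 ≤ j → j ≤ L → |c j / s j| ≤ a := by
    intro j h1 h2
    have := Finset.single_le_sum (f := fun j => |c j / s j|)
      (fun i _ => abs_nonneg _) (Finset.mem_Icc.mpr ⟨h1, h2⟩)
    simp only [hadef]
    linarith
  have hCS : ∀ j, 1 ≤ j → j ≤ L → (c j) ^ 2 ≤ s (j + 1) * s j := by
    intro j h1 h2
    exact covP_sq_le p (hf (j + 1) (by omega) (by omega)) (hf j (by omega) (by omega))
  refine ⟨2 * a ^ (2 * L + 1) * L, by positivity, ?_⟩
  intro M hMpos hMdec Λstar hmin h hh1 hhL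
  set ratio : ℕ → ℝ := fun k => (M k : ℝ) / ((M (k - 1) : ℝ) + (M k : ℝ)) with hratdef
  set m : ℕ → ℝ := fun j => (M j : ℝ)⁻¹ with hmdef
  set lam : ℕ → ℝ := lamExt L Λstar with hlamdef
  have lamtop : lam (L + 1) = 1 := lamExt_top L Λstar
  have hspos : ∀ j, 1 ≤ j → j ≤ L → 0 < s j := fun j h1 h2 => hvar j h1 h2
  have hmpos : ∀ j, j ≤ L → 0 < m j := by
    intro j hj
    simp only [hmdef, inv_pos]
    exact_mod_cast hMpos j hj
  have foc : ∀ k, 1 ≤ k → k ≤ L →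
      s k * (m (k - 1) + m k) * lam k
        = m k * c k * lam (k + 1) + m (k - 1) * covP p (f k) (f (k - 1)) * lam (k - 1) :=
    fun k h1 h2 => foc_of_min p L f M hMpos hvar Λstar hmin k h1 h2
  obtain ⟨piv, hpiv0, piv_succ⟩ : ∃ piv : ℕ → ℝ, piv 0 = 1 ∧ ∀ j,
      piv (j + 1) = s (j + 1) * (m j + m (j + 1))
        - (m j) ^ 2 * (if j = 0 then 0 else c j) ^ 2 / piv j :=
    ⟨fun n => Nat.rec (motive := fun _ => ℝ) (1 : ℝ)
      (fun j ih => s (j + 1) * (m j + m (j + 1))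
        - (m j) ^ 2 * (if j = 0 then 0 else c j) ^ 2 / ih) n, rfl, fun j => rfl⟩
  have piv_bounds : ∀ j, 1 ≤ j → j ≤ L →
      s j * m j ≤ piv j ∧ piv j ≤ s j * (m (j - 1) + m j) := by
    intro j
    induction j with
    | zero => omega
    | succ n ih =>
      intro _ hjL
      have hs1 : 0 < s (n + 1) := hspos (n + 1) (by omega) hjL
      have hm1 : 0 < m (n + 1) := hmpos (n + 1) hjL
      have hm0 : 0 < m n := hmpos n (by omega)
      by_cases hn : n = 0
      · subst hn
        rw [piv_succ 0, if_pos rfl]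
        constructor
        · have : (m 0) ^ 2 * (0 : ℝ) ^ 2 / piv 0 = 0 := by
            simp
          rw [this]
          nlinarith
        · have : (m 0) ^ 2 * (0 : ℝ) ^ 2 / piv 0 = 0 := by
            simp
          rw [this]
          simp only [Nat.add_sub_cancel]
          nlinarith
      · have hn1 : 1 ≤ n := by omega
        obtain ⟨ih1, ih2⟩ := ih hn1 (by omega)
        have hsn : 0 < s n := hspos n hn1 (by omega)
        have hpivn : 0 < piv n := lt_of_lt_of_le (mul_pos hsn hm0) ih1
        have hT0 : 0 ≤ (m n) ^ 2 * (if n = 0 then (0:ℝ) else c n) ^ 2 / piv n := by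
          positivity
        have hTle : (m n) ^ 2 * (if n = 0 then (0:ℝ) else c n) ^ 2 / piv n
            ≤ m n * s (n + 1) := by
          rw [if_neg hn]
          have hnum : (m n) ^ 2 * (c n) ^ 2 ≤ (m n) ^ 2 * (s (n + 1) * s n) := by
            have := hCS n hn1 (by omega)
            nlinarith
          have hdiv : (m n) ^ 2 * (c n) ^ 2 / piv n
              ≤ (m n) ^ 2 * (s (n + 1) * s n) / (s n * m n) :=
            div_le_div₀ (by positivity) hnum (mul_pos hsn hm0) ih1
          have heq : (m n) ^ 2 * (s (n + 1) * s n) / (s n * m n) = m n * s (n + 1) := by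
            field_simp
          linarith [hdiv, heq ▸ hdiv]
        rw [piv_succ n]
        constructor
        · nlinarith
        · simp only [Nat.add_sub_cancel]
          nlinarith
  have hpivpos : ∀ j, 1 ≤ j → j ≤ L → 0 < piv j := by
    intro j h1 h2
    exact lt_of_lt_of_le (mul_pos (hspos j h1 h2) (hmpos j h2)) (piv_bounds j h1 h2).1
  have lamrec : ∀ j, 1 ≤ j → j ≤ L → piv j * lam j = m j * c j * lam (j + 1) := by
    intro j
    induction j with
    | zero => omega
    | succ n ih =>
      intro _ hjL
      by_cases hn : n = 0
      · subst hn
        have hfoc := foc 1 le_rfl hjL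
        have l0 : lam 0 = 0 := lamExt_zero L Λstar
        simp only [show (1 : ℕ) - 1 = 0 from rfl, l0, mul_zero, add_zero] at hfoc
        rw [piv_succ 0, if_pos rfl]
        rw [hpiv0]
        ring_nf
        ring_nf at hfoc
        linarith
      · have hn1 : 1 ≤ n := by omega
        have ihh := ih hn1 (by omega)
        have hfoc := foc (n + 1) (by omega) hjL
        simp only [Nat.add_sub_cancel] at hfoc
        rw [hcc n] at hfoc
        have hpn : (0 : ℝ) < piv n := hpivpos n hn1 (by omega)
        rw [piv_succ n, if_neg hn]
        have e1 : (m n) ^ 2 * (c n) ^ 2 * lam (n + 1) = piv n * (m n * c n * lam n) := by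
          linear_combination (-(m n * c n)) * ihh
        rw [sub_mul, div_mul_eq_mul_div, e1, mul_div_cancel_left₀ _ (ne_of_gt hpn)]
        linarith [hfoc]
  set gam : ℕ → ℝ := fun j => m j * c j / piv j with hgamdef
  have lamgam : ∀ j, 1 ≤ j → j ≤ L → lam j = gam j * lam (j + 1) := by
    intro j h1 h2
    have hpj : (0 : ℝ) < piv j := hpivpos j h1 h2
    have := lamrec j h1 h2
    simp only [hgamdef]
    rw [div_mul_eq_mul_div, eq_div_iff (ne_of_gt hpj)]
    linear_combination this
  have prodform : ∀ d k, k + d = L + 1 → 1 ≤ k → lam k = ∏ j ∈ Finset.Icc k L, gam j := by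
    intro d
    induction d with
    | zero =>
      intro k hk _
      have hkL : k = L + 1 := by omega
      subst hkL
      rw [Finset.Icc_eq_empty (by omega), Finset.prod_empty, lamtop]
    | succ d ih =>
      intro k hk h1
      have hkL : k ≤ L := by omega
      rw [← Finset.Ico_add_one_right_eq_Icc, Finset.prod_eq_prod_Ico_succ_bot (by omega : k < L + 1),
        Finset.Ico_add_one_right_eq_Icc, ← ih (k + 1) (by omega) (by omega), ← lamgam k h1 hkL]
  have gambound : ∀ j, 1 ≤ j → j ≤ L → |gam j| ≤ |c j / s j| := by
    intro j h1 h2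
    have hpj : (0 : ℝ) < piv j := hpivpos j h1 h2
    have hmj : (0 : ℝ) < m j := hmpos j h2
    have hsj : (0 : ℝ) < s j := hspos j h1 h2
    have e1 : |gam j| = m j * |c j| / piv j := by
      simp only [hgamdef]
      rw [abs_div, abs_mul, abs_of_pos hmj, abs_of_pos hpj]
    have e2 : m j * |c j| / piv j ≤ m j * |c j| / (s j * m j) :=
      div_le_div_of_nonneg_left (by positivity) (mul_pos hsj hmj) (piv_bounds j h1 h2).1
    have e3 : m j * |c j| / (s j * m j) = |c j / s j| := by
      rw [abs_div, abs_of_pos hsj]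
      field_simp
    rw [e1, ← e3]
    exact e2
  have lambound : ∀ k, 1 ≤ k → k ≤ L + 1 → |lam k| ≤ a ^ (L + 1 - k) := by
    intro k h1 h2
    rw [prodform (L + 1 - k) k (by omega) h1]
    calc |∏ j ∈ Finset.Icc k L, gam j| ≤ ∏ j ∈ Finset.Icc k L, |gam j| :=
          le_of_eq (Finset.abs_prod _ _)
      _ ≤ ∏ j ∈ Finset.Icc k L, a := by
          apply Finset.prod_le_prod (fun j _ => abs_nonneg _)
          intro j hj
          simp only [Finset.mem_Icc] at hj
          exact le_trans (gambound j (le_trans h1 hj.1) hj.2) (haj j (le_trans h1 hj.1) hj.2)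
      _ = a ^ (L + 1 - k) := by
          rw [Finset.prod_const, Nat.card_Icc]
  have hratnn : ∀ j, (0 : ℝ) ≤ ratio j := by
    intro j
    simp only [hratdef]
    positivity
  have diffbound : ∀ j, 1 ≤ j → j ≤ L → |c j / s j - gam j| ≤ 2 * a * ratio j := by
    intro j h1 h2
    have hpj : (0 : ℝ) < piv j := hpivpos j h1 h2
    have hmj : (0 : ℝ) < m j := hmpos j h2
    have hmj1 : (0 : ℝ) < m (j - 1) := hmpos (j - 1) (by omega)
    have hsj : (0 : ℝ) < s j := hspos j h1 h2
    have hMj : (0 : ℝ) < (M j : ℝ) := by exact_mod_cast hMpos j h2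
    have hMj1 : (0 : ℝ) < (M (j - 1) : ℝ) := by exact_mod_cast hMpos (j - 1) (by omega)
    obtain ⟨hb1, hb2⟩ := piv_bounds j h1 h2
    have key : c j / s j - gam j = c j * (piv j - s j * m j) / (s j * piv j) := by
      simp only [hgamdef]
      field_simp
    have e1 : |c j / s j - gam j| = |c j| * (piv j - s j * m j) / (s j * piv j) := by
      rw [key, abs_div, abs_mul, abs_of_nonneg (by linarith : (0:ℝ) ≤ piv j - s j * m j),
        abs_of_pos (mul_pos hsj hpj)]
    have hnum : |c j| * (piv j - s j * m j) ≤ |c j| * (s j * m (j - 1)) := by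
      apply mul_le_mul_of_nonneg_left _ (abs_nonneg _)
      nlinarith
    have hden : s j * (s j * m j) ≤ s j * piv j :=
      mul_le_mul_of_nonneg_left hb1 (le_of_lt hsj)
    have e2 : |c j| * (piv j - s j * m j) / (s j * piv j)
        ≤ |c j| * (s j * m (j - 1)) / (s j * (s j * m j)) :=
      div_le_div₀ (by positivity) hnum (by positivity) hden
    have e3 : |c j| * (s j * m (j - 1)) / (s j * (s j * m j))
        = (|c j| / s j) * (m (j - 1) / m j) := by
      field_simp
    have e4 : m (j - 1) / m j = (M j : ℝ) / (M (j - 1) : ℝ) := by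
      have n1 : (M j : ℝ) ≠ 0 := ne_of_gt hMj
      have n2 : (M (j - 1) : ℝ) ≠ 0 := ne_of_gt hMj1
      simp only [hmdef]
      field_simp
    have e5 : (M j : ℝ) / (M (j - 1) : ℝ) ≤ 2 * ratio j := by
      have hdec : (M j : ℝ) ≤ (M (j - 1) : ℝ) := by exact_mod_cast hMdec j h1 h2
      simp only [hratdef]
      have e : 2 * ((M j : ℝ) / ((M (j - 1) : ℝ) + (M j : ℝ)))
          = (2 * (M j : ℝ)) / ((M (j - 1) : ℝ) + (M j : ℝ)) := by ring
      rw [e, div_le_div_iff₀ hMj1 (by positivity)]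
      nlinarith
    have e6 : |c j| / s j ≤ a := by
      have : |c j| / s j = |c j / s j| := by rw [abs_div, abs_of_pos hsj]
      rw [this]
      exact haj j h1 h2
    calc |c j / s j - gam j| = |c j| * (piv j - s j * m j) / (s j * piv j) := e1
      _ ≤ |c j| * (s j * m (j - 1)) / (s j * (s j * m j)) := e2
      _ = (|c j| / s j) * (m (j - 1) / m j) := e3
      _ = (|c j| / s j) * ((M j : ℝ) / (M (j - 1) : ℝ)) := by rw [e4]
      _ ≤ a * (2 * ratio j) := by
          apply mul_le_mul e6 e5 (by positivity) (le_of_lt ha0)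
      _ = 2 * a * ratio j := by ring
  have KB : ∀ d k, ∀ hd : k + d = L, ∀ h1 : 1 ≤ k,
      |(∏ j ∈ Finset.Icc k L, c j / s j) - lam k|
        ≤ 2 * a ^ (L + 1) * a ^ (L - k) * ((L + 1 - k : ℕ) : ℝ)
          * (Finset.Icc k L).sup' (Finset.nonempty_Icc.mpr (by omega : k ≤ L)) ratio := by
    intro d
    induction d with
    | zero =>
      intro k hd h1
      have hkL : k ≤ L := by omega
      have hkeq : k = L := by omega
      have hkmem : k ∈ Finset.Icc k L := Finset.mem_Icc.mpr ⟨le_rfl, hkL⟩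
      have hne : (Finset.Icc k L).Nonempty := ⟨k, hkmem⟩
      have hrS : ratio k ≤ (Finset.Icc k L).sup' hne ratio := Finset.le_sup' ratio hkmem
      have hSnn : (0:ℝ) ≤ (Finset.Icc k L).sup' hne ratio := le_trans (hratnn k) hrS
      have hprod : (∏ j ∈ Finset.Icc k L, c j / s j) = c k / s k := by
        rw [hkeq, Finset.Icc_self, Finset.prod_singleton]
      have hlamk : lam k = gam k := by
        rw [lamgam k h1 hkL, show k + 1 = L + 1 by omega, lamtop, mul_one]
      have hpow : a ≤ a ^ (L + 1) := by
        calc a = a ^ 1 := (pow_one a).symm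
          _ ≤ a ^ (L + 1) := pow_le_pow_right₀ ha1 (by omega)
      have main : |c k / s k - gam k| ≤ 2 * a ^ (L + 1) * a ^ (L - k)
          * ((L + 1 - k : ℕ) : ℝ) * ((Finset.Icc k L).sup' hne ratio) := by
        refine le_trans (diffbound k h1 hkL) ?_
        rw [show L - k = 0 by omega, show L + 1 - k = 1 by omega, pow_zero]
        push_cast
        nlinarith [hratnn k, hrS, hSnn, hpow,
          mul_le_mul_of_nonneg_right hpow (hratnn k),
          mul_le_mul_of_nonneg_left hrS (by positivity : (0:ℝ) ≤ 2 * a ^ (L+1))]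
      rw [hprod, hlamk]
      exact main
    | succ d ih =>
      intro k hd h1
      have hkL : k ≤ L := by omega
      have hk1L : k + 1 ≤ L := by omega
      have ihh := ih (k + 1) (by omega) (by omega)
      -- notation
      set S : ℝ := (Finset.Icc k L).sup' (Finset.nonempty_Icc.mpr (by omega : k ≤ L)) ratio
        with hSdef
      set S' : ℝ := (Finset.Icc (k+1) L).sup'
          (Finset.nonempty_Icc.mpr (by omega : k + 1 ≤ L)) ratio with hS'def
      have hSnn : 0 ≤ S := by
        refine le_trans (hratnn k) (Finset.le_sup' ratio ?_)
        simp [hkL]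
      have hS'S : S' ≤ S := by
        apply Finset.sup'_le
        intro j hj
        simp only [Finset.mem_Icc] at hj
        exact Finset.le_sup' ratio (Finset.mem_Icc.mpr ⟨by omega, hj.2⟩)
      have hS'nn : 0 ≤ S' := by
        refine le_trans (hratnn (k+1)) (Finset.le_sup' ratio ?_)
        simp [hk1L]
      have hrS : ratio k ≤ S := Finset.le_sup' ratio (Finset.mem_Icc.mpr ⟨le_rfl, hkL⟩)
      -- split product
      have hsplit : (∏ j ∈ Finset.Icc k L, c j / s j)
          = (c k / s k) * ∏ j ∈ Finset.Icc (k+1) L, c j / s j := by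
        rw [← Finset.Ico_add_one_right_eq_Icc, Finset.prod_eq_prod_Ico_succ_bot (by omega : k < L + 1),
          Finset.Ico_add_one_right_eq_Icc]
      have hlamk : lam k = gam k * lam (k + 1) := lamgam k h1 hkL
      set P : ℝ := ∏ j ∈ Finset.Icc (k+1) L, c j / s j with hPdef
      have htri : |(∏ j ∈ Finset.Icc k L, c j / s j) - lam k|
          ≤ |c k / s k| * |P - lam (k+1)| + |c k / s k - gam k| * |lam (k+1)| := by
        rw [hsplit, hlamk]
        have : c k / s k * P - gam k * lam (k+1)
            = (c k / s k) * (P - lam (k+1)) + (c k / s k - gam k) * lam (k+1) := by ring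
        rw [this]
        refine le_trans (abs_add_le _ _) ?_
        rw [abs_mul, abs_mul]
      have hb1 : |c k / s k| ≤ a := haj k h1 hkL
      have hb2 : |P - lam (k+1)| ≤ 2 * a ^ (L + 1) * a ^ (L - (k+1)) * ((L + 1 - (k+1) : ℕ) : ℝ) * S' := ihh
      have hb3 : |c k / s k - gam k| ≤ 2 * a * ratio k := diffbound k h1 hkL
      have hb4 : |lam (k+1)| ≤ a ^ (L - k) := by
        have := lambound (k+1) (by omega) (by omega)
        have he : L + 1 - (k + 1) = L - k := by omega
        rwa [he] at this
      have hpow1 : a * a ^ (L - (k+1)) = a ^ (L - k) := by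
        rw [← pow_succ']
        congr 1
        omega
      have hpow2 : a ≤ a ^ (L + 1) := by
        calc a = a ^ 1 := (pow_one a).symm
          _ ≤ a ^ (L + 1) := pow_le_pow_right₀ ha1 (by omega)
      have hcast : ((L + 1 - k : ℕ) : ℝ) = ((L + 1 - (k+1) : ℕ) : ℝ) + 1 := by
        have : L + 1 - k = (L + 1 - (k+1)) + 1 := by omega
        rw [this]
        push_cast
        ring
    -- combine
      have habs_nn : (0:ℝ) ≤ |P - lam (k+1)| := abs_nonneg _
      have hstep1 : |c k / s k| * |P - lam (k+1)|
          ≤ a * (2 * a ^ (L + 1) * a ^ (L - (k+1)) * ((L + 1 - (k+1) : ℕ) : ℝ) * S') := by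
        apply mul_le_mul hb1 hb2 habs_nn (le_of_lt ha0)
      have hstep2 : |c k / s k - gam k| * |lam (k+1)| ≤ (2 * a * ratio k) * a ^ (L - k) := by
        apply mul_le_mul hb3 hb4 (abs_nonneg _) (by positivity)
      have hstep1' : a * (2 * a ^ (L + 1) * a ^ (L - (k+1)) * ((L + 1 - (k+1) : ℕ) : ℝ) * S')
          ≤ 2 * a ^ (L + 1) * a ^ (L - k) * ((L + 1 - (k+1) : ℕ) : ℝ) * S := by
        have e : a * (2 * a ^ (L + 1) * a ^ (L - (k+1)) * ((L + 1 - (k+1) : ℕ) : ℝ) * S')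
            = 2 * a ^ (L + 1) * (a * a ^ (L - (k+1))) * ((L + 1 - (k+1) : ℕ) : ℝ) * S' := by
          ring
        rw [e, hpow1]
        have hnn : (0:ℝ) ≤ 2 * a ^ (L + 1) * a ^ (L - k) * ((L + 1 - (k+1) : ℕ) : ℝ) := by
          positivity
        nlinarith
      have hstep2' : (2 * a * ratio k) * a ^ (L - k)
          ≤ 2 * a ^ (L + 1) * a ^ (L - k) * 1 * S := by
        have h1' : (2 * a * ratio k) * a ^ (L - k) ≤ (2 * a * S) * a ^ (L - k) := by
          have : (0:ℝ) ≤ 2 * a * a ^ (L - k) := by positivity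
          nlinarith
        have h2' : (2 * a * S) * a ^ (L - k) ≤ (2 * a ^ (L+1) * S) * a ^ (L - k) := by
          have hp : (0:ℝ) ≤ a ^ (L - k) := by positivity
          have key2 : a * (2 * S * a ^ (L - k)) ≤ a ^ (L + 1) * (2 * S * a ^ (L - k)) :=
            mul_le_mul_of_nonneg_right hpow2
              (mul_nonneg (mul_nonneg (by norm_num : (0:ℝ) ≤ 2) hSnn) hp)
          nlinarith [key2]
        calc (2 * a * ratio k) * a ^ (L - k) ≤ (2 * a * S) * a ^ (L - k) := h1'
          _ ≤ (2 * a ^ (L+1) * S) * a ^ (L - k) := h2'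
          _ = 2 * a ^ (L + 1) * a ^ (L - k) * 1 * S := by ring
      calc |(∏ j ∈ Finset.Icc k L, c j / s j) - lam k|
          ≤ |c k / s k| * |P - lam (k+1)| + |c k / s k - gam k| * |lam (k+1)| := htri
        _ ≤ 2 * a ^ (L + 1) * a ^ (L - k) * ((L + 1 - (k+1) : ℕ) : ℝ) * S
            + 2 * a ^ (L + 1) * a ^ (L - k) * 1 * S := by
            have := le_trans hstep1 hstep1'
            have := le_trans hstep2 hstep2'
            linarith
        _ = 2 * a ^ (L + 1) * a ^ (L - k) * (((L + 1 - (k+1) : ℕ) : ℝ) + 1) * S := by ring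
        _ = 2 * a ^ (L + 1) * a ^ (L - k) * ((L + 1 - k : ℕ) : ℝ) * S := by rw [hcast]
  -- final assembly
  have hmain := KB (L - h) h (by omega) hh1
  set S : ℝ := (Finset.Icc h L).sup' (Finset.nonempty_Icc.mpr hhL) ratio with hSdef
  have hSnn : 0 ≤ S := by
    refine le_trans (hratnn h) (Finset.le_sup' ratio ?_)
    simp [hhL]
  have hfin : 2 * a ^ (L + 1) * a ^ (L - h) * ((L + 1 - h : ℕ) : ℝ) * S
      ≤ 2 * a ^ (2 * L + 1) * (L : ℝ) * S := by
    have hp1 : a ^ (L + 1) * a ^ (L - h) = a ^ (L + 1 + (L - h)) := (pow_add a (L + 1) (L - h)).symm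
    have hp2 : a ^ (L + 1 + (L - h)) ≤ a ^ (2 * L + 1) := pow_le_pow_right₀ ha1 (by omega)
    have hc1 : ((L + 1 - h : ℕ) : ℝ) ≤ (L : ℝ) := by
      have : (L + 1 - h : ℕ) ≤ L := by omega
      exact_mod_cast this
    have hc0 : (0:ℝ) ≤ ((L + 1 - h : ℕ) : ℝ) := by positivity
    have h1' : 2 * a ^ (L + 1) * a ^ (L - h) * ((L + 1 - h : ℕ) : ℝ) * S
        ≤ 2 * a ^ (2 * L + 1) * ((L + 1 - h : ℕ) : ℝ) * S := by
      rw [mul_assoc (2:ℝ) (a ^ (L+1)) (a ^ (L - h)), hp1]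
      have : (0:ℝ) ≤ ((L + 1 - h : ℕ) : ℝ) * S := mul_nonneg hc0 hSnn
      nlinarith
    have h2' : 2 * a ^ (2 * L + 1) * ((L + 1 - h : ℕ) : ℝ) * S
        ≤ 2 * a ^ (2 * L + 1) * (L : ℝ) * S := by
      have hnn : (0:ℝ) ≤ 2 * a ^ (2 * L + 1) := by positivity
      have := mul_le_mul_of_nonneg_right (mul_le_mul_of_nonneg_left hc1 hnn) hSnn
      linarith
    linarith
  simp only [hcc, hss]
  calc |(∏ j ∈ Finset.Icc h L, c j / s j) - lam h|
      ≤ 2 * a ^ (L + 1) * a ^ (L - h) * ((L + 1 - h : ℕ) : ℝ) * S := hmain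
    _ ≤ 2 * a ^ (2 * L + 1) * (L : ℝ) * S := hfin
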